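/- Let Σ₂ = {a,b} and w, w' ∈ Σ₂* with m := ι(w) = ι(w') < k. Then w ∼_k w' if and only if β_i = β_i' for all i ∈ [m] and α_i ∼_{k−m} α_i' for all i ∈ {0,1,…,m}, where α_i, β_i (resp. α_i', β_i') are the factors of the α-β-factorizations of w and w'. -/

import Mathlib

open List

variable {α : Type*} [DecidableEq α] [Fintype α]

/-- Simon `k`-congruence: `u` and `v` have the same scattered factors
(subsequences) of length at most `k`. -/
def SimonCongr (k : ℕ) (u v : List α) : Prop :=
  ∀ s : List α, s.length ≤ k → (s.Sublist u ↔ s.Sublist v)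

/-- `w` is `k`-universal with respect to the alphabet `S`: every word of length `k`
over `S` is a scattered factor of `w`. -/
def UniversalOn (S : Finset α) (k : ℕ) (w : List α) : Prop :=
  ∀ s : List α, s.length = k → (∀ x ∈ s, x ∈ S) → s.Sublist w

/-- The universality index of `w` w.r.t. the alphabet `S`. -/
noncomputable def iotaOn (S : Finset α) (w : List α) : ℕ :=
  sSup {k | UniversalOn S k w}

/-- The universality index of `w` w.r.t. the full alphabet. -/
noncomputable def iotaUniv (w : List α) : ℕ := iotaOn Finset.univ w

/-- `a` is an arch w.r.t. `S`: it contains every letter of `S`, and its last letter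
belongs to `S` and occurs exactly once in `a`. -/
def IsArchOn (S : Finset α) (a : List α) : Prop :=
  (∀ x ∈ S, x ∈ a) ∧ ∃ a' x, a = a' ++ [x] ∧ x ∈ S ∧ x ∉ a'

/-- `(ars, r)` is the arch factorization of `w` w.r.t. `S`. -/
def IsArchFactOn (S : Finset α) (w : List α) (ars : List (List α)) (r : List α) : Prop :=
  w = ars.flatten ++ r ∧ (∀ a ∈ ars, IsArchOn S a) ∧ ¬ (∀ x ∈ S, x ∈ r)

/-- `(A, B)` is the α-β-factorization of `w` with `m` arches:
`αᵢ₋₁βᵢ` (for `i ∈ [m]`) together with rest `α_m` is the arch factorization of `w`, and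
`(β_{m-i}α_{m-i})^R` together with rest `α₀^R` is the arch factorization of `w^R`. -/
def IsAlphaBetaFact (w : List α) (m : ℕ) (A B : ℕ → List α) : Prop :=
  IsArchFactOn Finset.univ w (List.ofFn fun i : Fin m => A i.val ++ B (i.val + 1)) (A m) ∧
  IsArchFactOn Finset.univ w.reverse
    (List.ofFn fun i : Fin m => (B (m - i.val) ++ A (m - i.val)).reverse) ((A 0).reverse)

/-- The concatenation `αᵢ βᵢ₊₁ αᵢ₊₁ ⋯ βⱼ αⱼ`. -/
def abSeg (A B : ℕ → List α) (i j : ℕ) : List α :=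
  A i ++ (((List.Ico (i + 1) (j + 1)).map fun l => B l ++ A l).flatten)

/-- The core of a `β`-factor: the factor with its first and last letter removed. -/
def coreOf (b : List α) : List α := (b.drop 1).dropLast


namespace BSC

lemma bool_resolve {y x : Bool} (h : y ≠ x) : y = !x := by cases x <;> cases y <;> simp_all

lemma not_mem_rep_not (x : Bool) (n : ℕ) : x ∉ replicate n (!x) := by
  intro h
  have := eq_of_mem_replicate h
  simp at this

lemma head_ne_of_ne {s t : List Bool} {a : Bool} (h : s <+ a :: t) (hh : s.head? ≠ some a) :
    s <+ t := by
  cases h with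
  | cons _ h => exact h
  | cons_cons _ h => simp at hh

lemma first_marker {x : Bool} {t v : List Bool} :
    ∀ {p : List Bool}, x ∉ p → (x :: t <+ p ++ x :: v ↔ t <+ v) := by
  intro p
  induction p with
  | nil => intro _; simpa using cons_sublist_cons
  | cons a p ih =>
    intro hp
    have hxa : x ≠ a := fun h => hp (h ▸ (mem_cons_self : a ∈ a :: p))
    have hp' : x ∉ p := fun h => hp (mem_cons_of_mem a h)
    constructor
    · intro h
      have h' : x :: t <+ p ++ x :: v := by
        cases h with
        | cons _ h => exact h
        | cons_cons _ h => exact absurd rfl hxa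
      exact (ih hp').1 h'
    · intro h
      exact ((ih hp').2 h).cons a

lemma last_marker {d : Bool} {t p suf : List Bool} (hd : d ∉ suf) :
    t ++ [d] <+ p ++ d :: suf ↔ t <+ p := by
  rw [← List.reverse_sublist (l₁ := t ++ [d]), ← List.reverse_sublist (l₁ := t)]
  have h1 : (t ++ [d]).reverse = d :: t.reverse := by simp
  have h2 : (p ++ d :: suf).reverse = suf.reverse ++ d :: p.reverse := by simp
  rw [h1, h2]
  exact first_marker (by simpa using hd)

lemma rep_absorb {c : Bool} {t : List Bool} (hht : t.head? ≠ some c) :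
    ∀ (N : ℕ) {a : ℕ} {z : List Bool},
      (replicate a c ++ t <+ replicate N c ++ z ↔ replicate (a - N) c ++ t <+ z) := by
  intro N
  induction N with
  | zero => intro a z; simp
  | succ N ih =>
    intro a z
    cases a with
    | zero =>
      simp only [replicate_zero, nil_append, Nat.zero_sub]
      rw [replicate_succ, cons_append]
      constructor
      · intro h
        have h' : t <+ replicate N c ++ z := head_ne_of_ne h hht
        simpa using (ih (a := 0)).1 (by simpa using h')
      · intro h
        exact Sublist.cons c (by simpa using (ih (a := 0)).2 (by simpa using h))
    | succ a =>
      rw [replicate_succ, replicate_succ (n := N), cons_append, cons_append, cons_sublist_cons]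
      simpa [Nat.succ_sub_succ] using ih (a := a)

lemma decomp (c : Bool) : ∀ (s : List Bool), ∃ a t, s = replicate a c ++ t ∧ t.head? ≠ some c := by
  intro s
  induction s with
  | nil => exact ⟨0, [], by simp, by simp⟩
  | cons b s ih =>
    by_cases hb : b = c
    · obtain ⟨a, t, heq, hht⟩ := ih
      exact ⟨a + 1, t, by rw [replicate_succ, cons_append, ← heq, hb], hht⟩
    · exact ⟨0, b :: s, by simp, by simpa using hb⟩






/-- one-sided Simon relation -/
def SCle (k : ℕ) (u v : List Bool) : Prop := ∀ s : List Bool, s.length ≤ k → s <+ u → s <+ v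

lemma scle_of_congr {k : ℕ} {u v : List Bool} (h : SimonCongr k u v) : SCle k u v :=
  fun s hs h1 => (h s hs).1 h1

lemma scle_of_congr' {k : ℕ} {u v : List Bool} (h : SimonCongr k u v) : SCle k v u :=
  fun s hs h1 => (h s hs).2 h1

lemma congr_of_scle {k : ℕ} {u v : List Bool} (h1 : SCle k u v) (h2 : SCle k v u) :
    SimonCongr k u v := fun s hs => ⟨h1 s hs, h2 s hs⟩

lemma simonCongr_symm {k : ℕ} {u v : List Bool} (h : SimonCongr k u v) : SimonCongr k v u :=
  fun s hs => (h s hs).symm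

lemma simonCongr_trans {k : ℕ} {u v z : List Bool} (h1 : SimonCongr k u v)
    (h2 : SimonCongr k v z) : SimonCongr k u z :=
  fun s hs => (h1 s hs).trans (h2 s hs)

lemma simonCongr_cons {k : ℕ} {u u' : List Bool} (h : SimonCongr k u u') (a : Bool) :
    SimonCongr k (a :: u) (a :: u') := by
  have key : ∀ {p q : List Bool}, SimonCongr k p q → SCle k (a :: p) (a :: q) := by
    intro p q hpq s hs hsub
    cases hsub with
    | cons _ h' => exact Sublist.cons a ((hpq s hs).1 h')
    | cons_cons _ h' =>
      rename_i s₁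
      exact Sublist.cons₂ a ((hpq s₁ (by simp at hs; omega)).1 h')
  exact congr_of_scle (key h) (key (simonCongr_symm h))

lemma min_eq_of_congr {K n n' : ℕ} {c : Bool} (h : SimonCongr K (replicate n c) (replicate n' c)) :
    min n K = min n' K := by
  have h1 : replicate (min n K) c <+ replicate n' c :=
    (h _ (by simp)).1 ((replicate_sublist_replicate c).2 (min_le_left _ _))
  have h2 : replicate (min n' K) c <+ replicate n c :=
    (h _ (by simp)).2 ((replicate_sublist_replicate c).2 (min_le_left _ _))
  have l1 := h1.length_le
  have l2 := h2.length_le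
  simp at l1 l2
  omega

/-- structured word built from α/β data -/
def wrd : ℕ → (ℕ → List Bool) → (ℕ → List Bool) → List Bool
  | 0, A, _ => A 0
  | m + 1, A, B => A 0 ++ (B 1 ++ wrd m (fun i => A (i + 1)) (fun i => B (i + 1)))

def raWrd : ℕ → (ℕ → List Bool) → (ℕ → List Bool) → List Bool
  | 0, _, _ => []
  | m + 1, A, B => B 1 ++ (A 1 ++ raWrd m (fun i => A (i + 1)) (fun i => B (i + 1)))

def hds : ℕ → (ℕ → List Bool) → List Bool
  | 0, _ => []
  | m + 1, B => hds m B ++ [(B (m + 1)).headI]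

lemma hds_len : ∀ (m : ℕ) (B : ℕ → List Bool), (hds m B).length = m := by
  intro m
  induction m with
  | zero => intro B; rfl
  | succ m ih => intro B; simp [hds, ih]

lemma hds_congr : ∀ (m : ℕ) (B B' : ℕ → List Bool),
    (∀ i, 1 ≤ i → i ≤ m → B i = B' i) → hds m B = hds m B' := by
  intro m
  induction m with
  | zero => intro B B' _; rfl
  | succ m ih =>
    intro B B' h
    simp only [hds]
    rw [ih B B' (fun i h1 h2 => h i h1 (by omega)), h (m + 1) (by omega) (by omega)]

lemma wrd_eq_ra : ∀ (m : ℕ) (A B : ℕ → List Bool), wrd m A B = A 0 ++ raWrd m A B := by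
  intro m
  induction m with
  | zero => intro A B; simp [wrd, raWrd]
  | succ m ih =>
    intro A B
    simp only [wrd, raWrd]
    rw [ih]

lemma wrd_snoc : ∀ (m : ℕ) (A B : ℕ → List Bool),
    wrd (m + 1) A B = wrd m A B ++ (B (m + 1) ++ A (m + 1)) := by
  intro m
  induction m with
  | zero => intro A B; simp [wrd]
  | succ m ih =>
    intro A B
    show A 0 ++ (B 1 ++ wrd (m + 1) _ _) = _
    rw [ih]
    simp [wrd, append_assoc]

/-- validity predicate for the α/β data -/
def Ok (m : ℕ) (A B : ℕ → List Bool) : Prop :=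
  (∀ i, i ≤ m → ∃ y n, A i = replicate n y) ∧
  ∀ i, i < m → ∃ x : Bool,
    (B (i + 1) = [x] ∧ (∃ n, 1 ≤ n ∧ A i = replicate n (!x)) ∧
      (∃ n, 1 ≤ n ∧ A (i + 1) = replicate n (!x))) ∨
    (B (i + 1) = [!x, x] ∧ (∃ n, A i = replicate n (!x)) ∧ (∃ n, A (i + 1) = replicate n x))

lemma Ok.shift {m : ℕ} {A B : ℕ → List Bool} (h : Ok (m + 1) A B) :
    Ok m (fun i => A (i + 1)) (fun i => B (i + 1)) :=
  ⟨fun i hi => h.1 (i + 1) (by omega), fun i hi => h.2 (i + 1) (by omega)⟩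

lemma Ok.restrict {m : ℕ} {A B : ℕ → List Bool} (h : Ok (m + 1) A B) : Ok m A B :=
  ⟨fun i hi => h.1 i (by omega), fun i hi => h.2 i (by omega)⟩

lemma raUniv : ∀ (m : ℕ) (A B : ℕ → List Bool), Ok m A B →
    ∀ s : List Bool, s.length ≤ m → s <+ raWrd m A B := by
  intro m
  induction m with
  | zero =>
    intro A B _ s hs
    have : s = [] := length_eq_zero_iff.mp (Nat.le_zero.mp hs)
    simp [this]
  | succ m ih =>
    intro A B hok s hs
    cases s with
    | nil => exact nil_sublist _
    | cons y s₂ =>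
      obtain ⟨x, hcase⟩ := hok.2 0 (by omega)
      have hxmem : x ∈ B 1 ++ A 1 ∧ (!x) ∈ B 1 ++ A 1 := by
        rcases hcase with ⟨hB, _, ⟨n, hn, hA⟩⟩ | ⟨hB, _, ⟨n, hA⟩⟩
        · constructor
          · rw [hB]; exact mem_append_left _ (by simp)
          · rw [hA]; exact mem_append_right _ (by simp [mem_replicate]; omega)
        · constructor <;> · rw [hB]; simp
      have hy : y ∈ B 1 ++ A 1 := by
        have : y = x ∨ y = !x := by cases y <;> cases x <;> simp
        rcases this with rfl | rfl
        · exact hxmem.1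
        · exact hxmem.2
      have hs₂ : s₂ <+ raWrd m (fun i => A (i + 1)) (fun i => B (i + 1)) :=
        ih _ _ hok.shift s₂ (by simp at hs; omega)
      show y :: s₂ <+ B 1 ++ (A 1 ++ raWrd m _ _)
      rw [← append_assoc]
      exact ((singleton_sublist.2 hy).append hs₂ : [y] ++ s₂ <+ _)

lemma univ_wrd {m : ℕ} {A B : ℕ → List Bool} (hok : Ok m A B) {s : List Bool}
    (hs : s.length ≤ m) : s <+ wrd m A B := by
  rw [wrd_eq_ra]
  exact (raUniv m A B hok s hs).trans (sublist_append_right _ _)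

lemma c1 {m : ℕ} {A B : ℕ → List Bool} (hok : Ok m A B) {n : ℕ} {y : Bool}
    (hA0 : A 0 = replicate n y) (hn : 1 ≤ n) {u : List Bool} (hu : u.length ≤ m) :
    y :: u <+ wrd m A B := by
  have h1 : u <+ raWrd m A B := raUniv m A B hok u hu
  have h2 : wrd m A B = replicate n y ++ raWrd m A B := by rw [wrd_eq_ra, hA0]
  rw [h2, show n = (n - 1) + 1 by omega, replicate_succ, cons_append]
  exact Sublist.cons₂ y (h1.trans (sublist_append_right _ _))

/-- normal form of a structured word with at least one arch -/
lemma nf {m : ℕ} {A B : ℕ → List Bool} (hok : Ok (m + 1) A B) :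
    ∃ (x : Bool) (N : ℕ), 1 ≤ N ∧
      wrd (m + 1) A B =
        replicate N (!x) ++ x :: wrd m (fun i => A (i + 1)) (fun i => B (i + 1)) ∧
      ((B 1 = [x] ∧ (∃ n, 1 ≤ n ∧ A 1 = replicate n (!x)) ∧ A 0 = replicate N (!x)) ∨
       (B 1 = [!x, x] ∧ (∃ n, A 1 = replicate n x) ∧
        ∃ n0, N = n0 + 1 ∧ A 0 = replicate n0 (!x))) := by
  obtain ⟨x, hcase⟩ := hok.2 0 (by omega)
  rcases hcase with ⟨hB, ⟨n, hn, hA0⟩, hA1⟩ | ⟨hB, ⟨n, hA0⟩, hA1⟩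
  · refine ⟨x, n, hn, ?_, Or.inl ⟨hB, hA1, hA0⟩⟩
    show A 0 ++ (B 1 ++ _) = _
    rw [hA0, hB]
    simp
  · refine ⟨x, n + 1, by omega, ?_, Or.inr ⟨hB, hA1, n, rfl, hA0⟩⟩
    show A 0 ++ (B 1 ++ _) = _
    rw [hA0, hB, replicate_succ' (n := n)]
    simp

lemma chi : ∀ (m : ℕ) (A B : ℕ → List Bool), Ok m A B →
    ∃ u : List Bool, u.length = m + 1 ∧ ¬ u <+ wrd m A B := by
  intro m
  induction m with
  | zero =>
    intro A B hok
    obtain ⟨y, n, hA⟩ := hok.1 0 (le_refl 0)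
    refine ⟨[!y], rfl, ?_⟩
    intro h
    rw [show wrd 0 A B = A 0 from rfl, hA] at h
    have := eq_of_mem_replicate (singleton_sublist.1 h)
    simp at this
  | succ m ih =>
    intro A B hok
    obtain ⟨x, N, hN, hweq, _⟩ := nf hok
    obtain ⟨u, hu, hnu⟩ := ih _ _ hok.shift
    refine ⟨x :: u, by simp [hu], ?_⟩
    rw [hweq, first_marker (not_mem_rep_not x N)]
    exact hnu

lemma stripAll : ∀ (m : ℕ) (A B : ℕ → List Bool), Ok m A B →
    ∀ t : List Bool, (t <+ A 0 ↔ t ++ hds m B <+ wrd m A B) := by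
  intro m
  induction m with
  | zero => intro A B _ t; simp [hds, wrd]
  | succ m ih =>
    intro A B hok t
    obtain ⟨x, hcase⟩ := hok.2 m (by omega)
    obtain ⟨d, suf, hBA, hd, hhead⟩ :
        ∃ d suf, B (m + 1) ++ A (m + 1) = d :: suf ∧ d ∉ suf ∧ (B (m + 1)).headI = d := by
      rcases hcase with ⟨hB, _, ⟨n, hn, hA⟩⟩ | ⟨hB, _, ⟨n, hA⟩⟩
      · exact ⟨x, replicate n (!x), by rw [hB, hA]; rfl, not_mem_rep_not x n, by rw [hB]; rfl⟩
      · refine ⟨!x, replicate (n + 1) x, ?_, ?_, by rw [hB]; rfl⟩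
        · rw [hB, hA, replicate_succ]; rfl
        · have := not_mem_rep_not (!x) (n + 1)
          simpa using this
    rw [wrd_snoc, hBA]
    show _ ↔ t ++ (hds m B ++ [(B (m + 1)).headI]) <+ _
    rw [hhead, ← append_assoc, last_marker hd]
    exact ih A B hok.restrict t


/-- one-sided congruence step for words sharing first arch data -/
lemma scle_step {k N N' κ : ℕ} {x : Bool} {v v' : List Bool}
    (hN : 1 ≤ N) (hN' : 1 ≤ N')
    (hmin : min N κ = min N' κ)
    (hvv' : SCle (k - 1) v v')
    (hAbs : ∀ u : List Bool, u.length ≤ k - κ → u.head? = some (!x) → u <+ v') :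
    SCle k (replicate N (!x) ++ x :: v) (replicate N' (!x) ++ x :: v') := by
  intro s hs hsub
  obtain ⟨a, t, rfl, hht⟩ := decomp (!x) s
  have hlen : a + t.length ≤ k := by simpa using hs
  have key : replicate (a - N) (!x) ++ t <+ x :: v := (rep_absorb hht N).1 hsub
  by_cases haN' : a ≤ N'
  · by_cases haN : a ≤ N
    · have hkey : t <+ x :: v := by simpa [Nat.sub_eq_zero_of_le haN] using key
      cases t with
      | nil =>
        simp only [append_nil]
        exact ((replicate_sublist_replicate (!x)).2 haN').trans (sublist_append_left _ _)
      | cons b t2 =>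
        have hb : b = x := by
          have : b ≠ !x := by simpa using hht
          cases b <;> cases x <;> simp_all
        rw [hb] at hkey ⊢
        have ht2 : t2 <+ v := cons_sublist_cons.1 hkey
        have ht2' : t2 <+ v' := hvv' t2 (by simp at hlen; omega) ht2
        exact ((replicate_sublist_replicate (!x)).2 haN').append (Sublist.cons₂ x ht2')
    · -- a > N
      have hcons : replicate (a - N) (!x) ++ t = (!x) :: (replicate (a - N - 1) (!x) ++ t) := by
        rw [show a - N = (a - N - 1) + 1 by omega, replicate_succ]; rfl
      have hr : replicate (a - N) (!x) ++ t <+ v := by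
        refine head_ne_of_ne key ?_
        rw [hcons]
        simp
      have hr' : replicate (a - N) (!x) ++ t <+ v' := hvv' _ (by simp; omega) hr
      have ht' : t <+ v' := (sublist_append_right _ _).trans hr'
      exact ((replicate_sublist_replicate (!x)).2 haN').append (Sublist.cons x ht')
  · -- a > N'
    rw [rep_absorb hht N']
    by_cases hc : κ ≤ N'
    · refine Sublist.cons x (hAbs _ (by simp; omega) ?_)
      rw [show a - N' = (a - N' - 1) + 1 by omega, replicate_succ]
      rfl
    · have hNN' : N = N' := by omega
      subst hNN'
      have hcons : replicate (a - N) (!x) ++ t = (!x) :: (replicate (a - N - 1) (!x) ++ t) := by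
        rw [show a - N = (a - N - 1) + 1 by omega, replicate_succ]; rfl
      have hr : replicate (a - N) (!x) ++ t <+ v := by
        refine head_ne_of_ne key ?_
        rw [hcons]
        simp
      exact Sublist.cons x (hvv' _ (by simp; omega) hr)


set_option maxHeartbeats 1000000 in
lemma bsc_main : ∀ (m k : ℕ) (A B A' B' : ℕ → List Bool), Ok m A B → Ok m A' B' → m < k →
    (SimonCongr k (wrd m A B) (wrd m A' B') ↔
      ((∀ i, 1 ≤ i → i ≤ m → B i = B' i) ∧
       ∀ i, i ≤ m → SimonCongr (k - m) (A i) (A' i))) := by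
  intro m
  induction m with
  | zero =>
    intro k A B A' B' _ _ _
    constructor
    · intro h
      refine ⟨fun i h1 h2 => by omega, fun i hi => ?_⟩
      have hi0 : i = 0 := by omega
      subst hi0
      exact h
    · rintro ⟨-, h⟩
      exact h 0 (le_refl 0)
  | succ m ih =>
    intro k A B A' B' hok hok' hmk
    obtain ⟨x, N, hN, hweq, hsd⟩ := nf hok
    obtain ⟨x', N', hN', hweq', hsd'⟩ := nf hok'
    have hokv := hok.shift
    have hokv' := hok'.shift
    have hk1m : k - 1 - m = k - (m + 1) := by omega
    constructor
    · intro hsc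
      have hxx : x' = x := by
        by_contra hne
        have hx' : x' = !x := bool_resolve hne
        rw [hx'] at hweq'
        rw [Bool.not_not] at hweq'
        obtain ⟨u, hulen, hnu⟩ := chi m _ _ hokv
        have hw'cons : wrd (m + 1) A' B' =
            x :: (replicate (N' - 1) x ++
              (!x) :: wrd m (fun i => A' (i + 1)) (fun i => B' (i + 1))) := by
          rw [hweq']
          conv_lhs => rw [show N' = (N' - 1) + 1 by omega, replicate_succ]
          rfl
        have hcong : ∀ t : List Bool, t.length ≤ k - 1 →
            (t <+ wrd m (fun i => A (i + 1)) (fun i => B (i + 1)) ↔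
             t <+ replicate (N' - 1) x ++
               (!x) :: wrd m (fun i => A' (i + 1)) (fun i => B' (i + 1))) := by
          intro t ht
          have h1 : x :: t <+ wrd (m + 1) A B ↔
              t <+ wrd m (fun i => A (i + 1)) (fun i => B (i + 1)) := by
            rw [hweq]; exact first_marker (not_mem_rep_not x N)
          have h2 : x :: t <+ wrd (m + 1) A' B' ↔
              t <+ replicate (N' - 1) x ++
                (!x) :: wrd m (fun i => A' (i + 1)) (fun i => B' (i + 1)) := by
            rw [hw'cons]; exact cons_sublist_cons
          exact h1.symm.trans ((hsc (x :: t) (by simp; omega)).trans h2)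
        by_cases hN'2 : 2 ≤ N'
        · apply hnu
          apply (hcong u (by omega)).2
          cases u with
          | nil => exact nil_sublist _
          | cons y u₂ =>
            have hy : y ∈ replicate (N' - 1) x ++ [!x] := by
              have : y = x ∨ y = !x := by cases y <;> cases x <;> simp
              rcases this with rfl | rfl
              · exact mem_append_left _ (by simp [mem_replicate]; omega)
              · exact mem_append_right _ (by simp)
            have hu₂ : u₂ <+ wrd m (fun i => A' (i + 1)) (fun i => B' (i + 1)) :=
              univ_wrd hokv' (by simp at hulen; omega)
            have hcal : [y] ++ u₂ <+ (replicate (N' - 1) x ++ [!x]) ++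
                wrd m (fun i => A' (i + 1)) (fun i => B' (i + 1)) :=
              (singleton_sublist.2 hy).append hu₂
            simpa [append_assoc] using hcal
        · have hN'1 : N' = 1 := by omega
          have hcong1 : ∀ t : List Bool, t.length ≤ k - 1 →
              (t <+ wrd m (fun i => A (i + 1)) (fun i => B (i + 1)) ↔
               t <+ (!x) :: wrd m (fun i => A' (i + 1)) (fun i => B' (i + 1))) := by
            intro t ht
            have := hcong t ht
            simpa [hN'1] using this
          have hwcons : wrd (m + 1) A B =
              (!x) :: (replicate (N - 1) (!x) ++
                x :: wrd m (fun i => A (i + 1)) (fun i => B (i + 1))) := by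
            rw [hweq]
            conv_lhs => rw [show N = (N - 1) + 1 by omega, replicate_succ]
            rfl
          have hcong2 : ∀ t : List Bool, t.length ≤ k - 1 →
              (t <+ replicate (N - 1) (!x) ++
                x :: wrd m (fun i => A (i + 1)) (fun i => B (i + 1)) ↔
               t <+ wrd m (fun i => A' (i + 1)) (fun i => B' (i + 1))) := by
            intro t ht
            have h1 : (!x) :: t <+ wrd (m + 1) A B ↔
                t <+ replicate (N - 1) (!x) ++
                  x :: wrd m (fun i => A (i + 1)) (fun i => B (i + 1)) := by
              rw [hwcons]; exact cons_sublist_cons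
            have h2 : (!x) :: t <+ wrd (m + 1) A' B' ↔
                t <+ wrd m (fun i => A' (i + 1)) (fun i => B' (i + 1)) := by
              rw [hweq']
              refine first_marker ?_
              have := not_mem_rep_not (!x) N'
              simpa using this
            exact h1.symm.trans ((hsc ((!x) :: t) (by simp; omega)).trans h2)
          by_cases hN2 : 2 ≤ N
          · obtain ⟨u', hulen', hnu'⟩ := chi m _ _ hokv'
            apply hnu'
            apply (hcong2 u' (by omega)).1
            cases u' with
            | nil => exact nil_sublist _
            | cons y u₂ =>
              have hy : y ∈ replicate (N - 1) (!x) ++ [x] := by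
                have : y = x ∨ y = !x := by cases y <;> cases x <;> simp
                rcases this with rfl | rfl
                · exact mem_append_right _ (by simp)
                · exact mem_append_left _ (by simp [mem_replicate]; omega)
              have hu₂ : u₂ <+ wrd m (fun i => A (i + 1)) (fun i => B (i + 1)) :=
                univ_wrd hokv (by simp at hulen'; omega)
              have hcal : [y] ++ u₂ <+ (replicate (N - 1) (!x) ++ [x]) ++
                  wrd m (fun i => A (i + 1)) (fun i => B (i + 1)) :=
                (singleton_sublist.2 hy).append hu₂
              simpa [append_assoc] using hcal
          · have hN1 : N = 1 := by omega
            have hc2 : ∀ t : List Bool, t.length ≤ k - 1 →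
                (t <+ x :: wrd m (fun i => A (i + 1)) (fun i => B (i + 1)) ↔
                 t <+ wrd m (fun i => A' (i + 1)) (fun i => B' (i + 1))) := by
              intro t ht
              have := hcong2 t ht
              simpa [hN1] using this
            have hcA : SimonCongr (k - 1)
                ((!x) :: x :: wrd m (fun i => A (i + 1)) (fun i => B (i + 1)))
                ((!x) :: wrd m (fun i => A' (i + 1)) (fun i => B' (i + 1))) :=
              simonCongr_cons (fun t ht => hc2 t ht) (!x)
            have hcB : SimonCongr (k - 1) (wrd m (fun i => A (i + 1)) (fun i => B (i + 1)))
                ((!x) :: wrd m (fun i => A' (i + 1)) (fun i => B' (i + 1))) :=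
              fun t ht => hcong1 t ht
            have hfin := simonCongr_trans hcB (simonCongr_symm hcA)
            apply hnu
            apply (hfin u (by omega)).2
            cases u with
            | nil => exact nil_sublist _
            | cons y u₂ =>
              have hu₂ : u₂ <+ wrd m (fun i => A (i + 1)) (fun i => B (i + 1)) :=
                univ_wrd hokv (by simp at hulen; omega)
              have hy : y ∈ [!x, x] := by cases y <;> cases x <;> simp
              have hcal : [y] ++ u₂ <+ [!x, x] ++
                  wrd m (fun i => A (i + 1)) (fun i => B (i + 1)) :=
                (singleton_sublist.2 hy).append hu₂
              simpa using hcal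
      rw [hxx] at hweq' hsd'
      have hvv' : SimonCongr (k - 1) (wrd m (fun i => A (i + 1)) (fun i => B (i + 1)))
          (wrd m (fun i => A' (i + 1)) (fun i => B' (i + 1))) := by
        intro t ht
        have h1 : x :: t <+ wrd (m + 1) A B ↔
            t <+ wrd m (fun i => A (i + 1)) (fun i => B (i + 1)) := by
          rw [hweq]; exact first_marker (not_mem_rep_not x N)
        have h2 : x :: t <+ wrd (m + 1) A' B' ↔
            t <+ wrd m (fun i => A' (i + 1)) (fun i => B' (i + 1)) := by
          rw [hweq']; exact first_marker (not_mem_rep_not x N')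
        exact h1.symm.trans ((hsc (x :: t) (by simp; omega)).trans h2)
      have hIH := (ih (k - 1) _ _ _ _ hokv hokv' (by omega)).1 hvv'
      have hA1c : SimonCongr (k - (m + 1)) (A 1) (A' 1) := by
        have := hIH.2 0 (by omega)
        rwa [hk1m] at this
      have hB1 : B 1 = B' 1 := by
        rcases hsd with ⟨hB, ⟨n1, hn1, hA1w⟩, -⟩ | ⟨hB, ⟨n1, hA1w⟩, -⟩ <;>
          rcases hsd' with ⟨hB', ⟨n1', hn1', hA1w'⟩, -⟩ | ⟨hB', ⟨n1', hA1w'⟩, -⟩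
        · rw [hB, hB']
        · exfalso
          have h1 : [!x] <+ A 1 := by
            rw [hA1w]; exact singleton_sublist.2 (by simp [mem_replicate]; omega)
          have h2 := (hA1c [!x] (by simp; omega)).1 h1
          rw [hA1w'] at h2
          have := eq_of_mem_replicate (singleton_sublist.1 h2)
          simp at this
        · exfalso
          have h1 : [!x] <+ A' 1 := by
            rw [hA1w']; exact singleton_sublist.2 (by simp [mem_replicate]; omega)
          have h2 := (hA1c [!x] (by simp; omega)).2 h1
          rw [hA1w] at h2
          have := eq_of_mem_replicate (singleton_sublist.1 h2)
          simp at this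
        · rw [hB, hB']
      have hBeq : ∀ i, 1 ≤ i → i ≤ m + 1 → B i = B' i := by
        intro i h1 h2
        cases i with
        | zero => omega
        | succ i =>
          cases i with
          | zero => exact hB1
          | succ j => exact hIH.1 (j + 1) (by omega) (by omega)
      refine ⟨hBeq, ?_⟩
      intro i hi
      cases i with
      | zero =>
        intro t ht
        have hstrip := stripAll (m + 1) A B hok t
        have hstrip' := stripAll (m + 1) A' B' hok' t
        rw [hds_congr (m + 1) B B' hBeq] at hstrip
        rw [hstrip, hstrip']
        exact hsc _ (by rw [length_append, hds_len]; omega)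
      | succ i =>
        have := hIH.2 i (by omega)
        rwa [hk1m] at this
    · rintro ⟨hBeq, hAeq⟩
      have hvv' : SimonCongr (k - 1) (wrd m (fun i => A (i + 1)) (fun i => B (i + 1)))
          (wrd m (fun i => A' (i + 1)) (fun i => B' (i + 1))) := by
        apply (ih (k - 1) _ _ _ _ hokv hokv' (by omega)).2
        refine ⟨fun i h1 h2 => hBeq (i + 1) (by omega) (by omega), fun i hi => ?_⟩
        rw [hk1m]
        exact hAeq (i + 1) (by omega)
      have hA0c := hAeq 0 (by omega)
      have hB1 := hBeq 1 (by omega) (by omega)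
      rw [hweq, hweq']
      rcases hsd with ⟨hB, ⟨n1, hn1, hA1w⟩, hA0w⟩ | ⟨hB, ⟨n1, hA1w⟩, n0, hNn0, hA0w⟩ <;>
        rcases hsd' with ⟨hB', ⟨n1', hn1', hA1w'⟩, hA0w'⟩ | ⟨hB', ⟨n1', hA1w'⟩, n0', hNn0', hA0w'⟩
      · -- single / single
        have hxx : x' = x := by
          rw [hB, hB'] at hB1
          simpa using hB1.symm
        rw [hxx] at hA1w' hA0w' ⊢
        rw [hA0w, hA0w'] at hA0c
        have hmin : min N (k - (m + 1)) = min N' (k - (m + 1)) := min_eq_of_congr hA0c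
        have hAbs' : ∀ u : List Bool, u.length ≤ k - (k - (m + 1)) → u.head? = some (!x) →
            u <+ wrd m (fun i => A' (i + 1)) (fun i => B' (i + 1)) := by
          intro u hu hhu
          cases u with
          | nil => simp at hhu
          | cons y u₂ =>
            have hy : y = !x := by simpa using hhu
            subst hy
            exact c1 hokv' hA1w' hn1' (by simp at hu; omega)
        have hAbs : ∀ u : List Bool, u.length ≤ k - (k - (m + 1)) → u.head? = some (!x) →
            u <+ wrd m (fun i => A (i + 1)) (fun i => B (i + 1)) := by
          intro u hu hhu
          cases u with
          | nil => simp at hhu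
          | cons y u₂ =>
            have hy : y = !x := by simpa using hhu
            subst hy
            exact c1 hokv hA1w hn1 (by simp at hu; omega)
        exact congr_of_scle
          (scle_step hN hN' hmin (scle_of_congr hvv') hAbs')
          (scle_step hN' hN hmin.symm (scle_of_congr' hvv') hAbs)
      · exfalso
        rw [hB, hB'] at hB1
        simp at hB1
      · exfalso
        rw [hB, hB'] at hB1
        simp at hB1
      · -- double / double
        have hxx : x' = x := by
          rw [hB, hB'] at hB1
          have := hB1.symm
          simp at this
          exact this
        rw [hxx] at hA0w' ⊢
        rw [hA0w, hA0w'] at hA0c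
        have hminn : min n0 (k - (m + 1)) = min n0' (k - (m + 1)) := min_eq_of_congr hA0c
        have hmin : min N (k - (m + 1) + 1) = min N' (k - (m + 1) + 1) := by omega
        have hAbs' : ∀ u : List Bool, u.length ≤ k - (k - (m + 1) + 1) →
            u.head? = some (!x) →
            u <+ wrd m (fun i => A' (i + 1)) (fun i => B' (i + 1)) := by
          intro u hu _
          exact univ_wrd hokv' (by omega)
        have hAbs : ∀ u : List Bool, u.length ≤ k - (k - (m + 1) + 1) →
            u.head? = some (!x) →
            u <+ wrd m (fun i => A (i + 1)) (fun i => B (i + 1)) := by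
          intro u hu _
          exact univ_wrd hokv (by omega)
        exact congr_of_scle
          (scle_step hN hN' hmin (scle_of_congr hvv') hAbs')
          (scle_step hN' hN hmin.symm (scle_of_congr' hvv') hAbs)


lemma arch_shape {a : List Bool} (h : IsArchOn Finset.univ a) :
    ∃ (x : Bool) (p : ℕ), 1 ≤ p ∧ a = replicate p (!x) ++ [x] := by
  obtain ⟨hall, a', x, rfl, -, hx⟩ := h
  have ha' : a' = replicate a'.length (!x) := by
    rw [List.eq_replicate_iff]
    exact ⟨rfl, fun b hb => bool_resolve (fun he => hx (he ▸ hb))⟩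
  have hmem : (!x) ∈ a' := by
    have := hall (!x) (Finset.mem_univ _)
    rcases mem_append.1 this with h | h
    · exact h
    · simp at h
  have hlen : 1 ≤ a'.length := length_pos_iff.2 (ne_nil_of_mem hmem)
  exact ⟨x, a'.length, hlen, by rw [← ha']⟩

lemma rest_shape {r : List Bool} (h : ¬ ∀ x ∈ (Finset.univ : Finset Bool), x ∈ r) :
    ∃ (y : Bool) (n : ℕ), r = replicate n y := by
  push_neg at h
  obtain ⟨x, -, hx⟩ := h
  refine ⟨!x, r.length, ?_⟩
  rw [List.eq_replicate_iff]
  exact ⟨rfl, fun b hb => bool_resolve (fun he => hx (he ▸ hb))⟩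

lemma rev_arch_shape {b a : List Bool} (h : IsArchOn Finset.univ ((b ++ a).reverse)) :
    ∃ (x : Bool) (q : ℕ), 1 ≤ q ∧ b ++ a = x :: replicate q (!x) := by
  obtain ⟨x, p, hp, heq⟩ := arch_shape h
  refine ⟨x, p, hp, ?_⟩
  have := congrArg List.reverse heq
  simpa [reverse_replicate] using this

lemma wrd_ofFn : ∀ (m : ℕ) (A B : ℕ → List Bool),
    (List.ofFn fun i : Fin m => A i.val ++ B (i.val + 1)).flatten ++ A m = wrd m A B := by
  intro m
  induction m with
  | zero => intro A B; simp [wrd]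
  | succ m ih =>
    intro A B
    rw [List.ofFn_succ]
    simp only [flatten_cons, Fin.val_zero, Fin.val_succ]
    show (A 0 ++ B 1) ++ _ ++ A (m + 1) = A 0 ++ (B 1 ++ wrd m (fun i => A (i + 1)) (fun i => B (i + 1)))
    rw [← ih (fun i => A (i + 1)) (fun i => B (i + 1))]
    simp [append_assoc]

lemma extract {w : List Bool} {m : ℕ} {A B : ℕ → List Bool} (h : IsAlphaBetaFact w m A B) :
    w = wrd m A B ∧ Ok m A B := by
  obtain ⟨⟨hw1, harch, hrest⟩, ⟨hw2, hrarch, hrest0⟩⟩ := h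
  have harch' : ∀ i, i < m → ∃ x p, 1 ≤ p ∧ A i ++ B (i + 1) = replicate p (!x) ++ [x] := by
    intro i hi
    exact arch_shape (List.forall_mem_ofFn_iff.1 harch ⟨i, hi⟩)
  have hrarch' : ∀ j, 1 ≤ j → j ≤ m →
      ∃ x q, 1 ≤ q ∧ B j ++ A j = x :: replicate q (!x) := by
    intro j h1 h2
    have hlt : m - j < m := by omega
    have hmem := List.forall_mem_ofFn_iff.1 hrarch ⟨m - j, hlt⟩
    have hmj : m - (m - j) = j := by omega
    rw [hmj] at hmem
    exact rev_arch_shape hmem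
  have hA0 : ∃ y n, A 0 = replicate n y := by
    obtain ⟨y, n, hy⟩ := rest_shape hrest0
    refine ⟨y, n, ?_⟩
    have := congrArg List.reverse hy
    simpa [reverse_replicate] using this
  have hQ : ∀ j, (j ≤ m → ∃ y n, A j = replicate n y) ∧ (1 ≤ j → j ≤ m → B j ≠ []) := by
    intro j
    induction j with
    | zero => exact ⟨fun _ => hA0, fun h1 _ => by omega⟩
    | succ j ihj =>
      have hBne : j + 1 ≤ m → B (j + 1) ≠ [] := by
        intro hjm hBnil
        obtain ⟨yA, nA, hAj⟩ := ihj.1 (by omega)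
        obtain ⟨x, p, hp, heq⟩ := harch' j (by omega)
        rw [hBnil, append_nil, hAj] at heq
        have hx : x ∈ replicate nA yA := by
          rw [heq]; exact mem_append_right _ (by simp)
        have hnx : (!x) ∈ replicate nA yA := by
          rw [heq]; exact mem_append_left _ (by simp [mem_replicate]; omega)
        have e1 := eq_of_mem_replicate hx
        have e2 := eq_of_mem_replicate hnx
        rw [← e1] at e2
        simp at e2
      refine ⟨?_, fun _ h2 => hBne h2⟩
      intro hjm
      obtain ⟨x, q, hq, heq⟩ := hrarch' (j + 1) (by omega) hjm
      have hBlen : 1 ≤ (B (j + 1)).length := length_pos_iff.2 (hBne hjm)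
      refine ⟨!x, q - ((B (j + 1)).length - 1), ?_⟩
      have hdrop := congrArg (List.drop (B (j + 1)).length) heq
      rw [List.drop_left] at hdrop
      rw [hdrop, show (B (j + 1)).length = ((B (j + 1)).length - 1) + 1 by omega,
        List.drop_succ_cons, List.drop_replicate]
      congr 1
  have hOk : Ok m A B := by
    refine ⟨fun i hi => (hQ i).1 hi, ?_⟩
    intro i hi
    obtain ⟨x, p, hp, heq⟩ := harch' i hi
    obtain ⟨d, q, hq, heqr⟩ := hrarch' (i + 1) (by omega) (by omega)
    have hBne : B (i + 1) ≠ [] := (hQ (i + 1)).2 (by omega) (by omega)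
    obtain ⟨ℓ, hℓ⟩ : ∃ ℓ, (B (i + 1)).length = ℓ := ⟨_, rfl⟩
    have hBlen : 1 ≤ ℓ := by rw [← hℓ]; exact length_pos_iff.2 hBne
    have hlen : (A i).length + ℓ = p + 1 := by
      have := congrArg List.length heq
      simp at this
      omega
    have hAi : A i = replicate (A i).length (!x) := by
      have htake := congrArg (List.take (A i).length) heq
      rw [List.take_left] at htake
      conv_lhs => rw [htake]
      rw [List.take_append_of_le_length (by rw [length_replicate]; omega),
        List.take_replicate]
      congr 1
      omega
    have hBi : B (i + 1) = replicate (ℓ - 1) (!x) ++ [x] := by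
      have hdrop := congrArg (List.drop (A i).length) heq
      rw [List.drop_left] at hdrop
      conv_lhs => rw [hdrop]
      rw [List.drop_append_of_le_length (by rw [length_replicate]; omega),
        List.drop_replicate, show p - (A i).length = ℓ - 1 by omega]
    refine ⟨x, ?_⟩
    by_cases hB1 : ℓ = 1
    · left
      have hBx : B (i + 1) = [x] := by rw [hBi, hB1]; simp
      rw [hBx] at heqr
      have hxd : x = d := by
        have := congrArg List.head? heqr
        simpa using this
      have hA1 : A (i + 1) = replicate q (!d) := by
        have := congrArg List.tail heqr
        simpa using this
      refine ⟨hBx, ⟨p, hp, ?_⟩, ⟨q, hq, ?_⟩⟩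
      · rw [hAi]; congr 1; omega
      · rw [hA1, hxd]
    · have hB2 : 2 ≤ ℓ := by omega
      have hBcons : B (i + 1) = (!x) :: (replicate (ℓ - 2) (!x) ++ [x]) := by
        rw [hBi, show ℓ - 1 = (ℓ - 2) + 1 by omega, replicate_succ]
        rfl
      rw [hBcons] at heqr
      have hd1 : (!x) = d := by
        have := congrArg List.head? heqr
        simpa using this
      have hd2 : (replicate (ℓ - 2) (!x) ++ [x]) ++ A (i + 1) = replicate q (!d) := by
        have := congrArg List.tail heqr
        simpa using this
      have hff : ℓ - 2 = 0 := by
        by_contra hne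
        have h1 : (!x) ∈ replicate q (!d) := by
          rw [← hd2]
          exact mem_append_left _ (mem_append_left _ (by simp [mem_replicate]; omega))
        have h2 : x ∈ replicate q (!d) := by
          rw [← hd2]
          exact mem_append_left _ (mem_append_right _ (by simp))
        have e1 := eq_of_mem_replicate h1
        have e2 := eq_of_mem_replicate h2
        rw [← e1] at e2
        simp at e2
      right
      have hBx : B (i + 1) = [!x, x] := by rw [hBcons, hff]; rfl
      have hdx : (!d) = x := by rw [← hd1]; simp
      have hA1 : A (i + 1) = replicate (q - 1) x := by
        rw [hff] at hd2
        simp only [replicate_zero, nil_append] at hd2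
        rw [show q = (q - 1) + 1 by omega, replicate_succ] at hd2
        have htl := congrArg List.tail hd2
        simp only [singleton_append, List.tail_cons] at htl
        rw [htl, hdx]
      refine ⟨hBx, ⟨(A i).length, hAi⟩, ⟨q - 1, hA1⟩⟩
  refine ⟨?_, hOk⟩
  rw [hw1, wrd_ofFn]

end BSC

/-- characterization of Simon's congruence for binary words. -/
theorem binary_simonCongr_characterization (k m : ℕ) (w w' : List Bool)
    (A B A' B' : ℕ → List Bool)
    (hw : IsAlphaBetaFact w m A B) (hw' : IsAlphaBetaFact w' m A' B')
    (hiw : iotaUniv w = m) (hiw' : iotaUniv w' = m) (hmk : m < k) :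
    SimonCongr k w w' ↔
      ((∀ i, 1 ≤ i → i ≤ m → B i = B' i) ∧
       (∀ i ≤ m, SimonCongr (k - m) (A i) (A' i))) := by
  obtain ⟨hw1, hok⟩ := BSC.extract hw
  obtain ⟨hw1', hok'⟩ := BSC.extract hw'
  rw [hw1, hw1']
  exact BSC.bsc_main m k A B A' B' hok hok' hmk
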